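/- The sum over m in {1,...,d} with m ≡ d (mod 2) of (m/d)·C(d, (d−m)/2) equals C(d−1, ⌈(d−1)/2⌉). -/

import Mathlib

/-- The sum over `m ∈ {1,...,d}` with `m ≡ d (mod 2)` of `(m/d)·C(d, (d-m)/2)`
equals the central binomial coefficient `C(d-1, ⌈(d-1)/2⌉)`. -/
theorem stmt_4 (d : ℕ) (hd : 1 ≤ d) :
    ∑ m ∈ (Finset.Icc 1 d).filter (fun m => m % 2 = d % 2),
        (m : ℚ) / d * (d.choose ((d - m) / 2))
      = ((d - 1).choose ⌈((d : ℚ) - 1) / 2⌉₊ : ℚ) := by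
  obtain ⟨n, hdn⟩ : ∃ n, d = n + 1 := ⟨d - 1, by omega⟩
  have hd0 : (d : ℚ) ≠ 0 := by positivity
  have hnd : d - 1 = n := by omega
  set K := n / 2 with hK
  -- compute the ceiling
  have hceil : ⌈((d : ℚ) - 1) / 2⌉₊ = (n + 1) / 2 := by
    have h1 : ((d : ℚ) - 1) = (n : ℚ) := by rw [hdn]; push_cast; ring
    rw [h1]
    rcases Nat.even_or_odd n with ⟨q, hq⟩ | ⟨q, hq⟩
    · subst hq
      rw [show ((q + q : ℕ) : ℚ) / 2 = (q : ℚ) by push_cast; ring]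
      simp; omega
    · subst hq
      rw [show ((2 * q + 1 : ℕ) : ℚ) / 2 = (1 / 2 : ℚ) + (q : ℕ) by push_cast; ring,
        Nat.ceil_add_natCast (by norm_num)]
      have h : ⌈(1 / 2 : ℚ)⌉₊ = 1 := by
        rw [Nat.ceil_eq_iff (by norm_num)]; norm_num
      rw [h]; omega
  have hsymm : (n.choose ((n + 1) / 2) : ℚ) = (n.choose K : ℚ) := by
    have h2 : (n + 1) / 2 = n - K := by omega
    rw [h2, Nat.choose_symm (by omega)]
  rw [hceil, hnd, hsymm]
  -- reindex the sum
  have hre : ∑ m ∈ (Finset.Icc 1 d).filter (fun m => m % 2 = d % 2),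
        (m : ℚ) / d * (d.choose ((d - m) / 2))
      = ∑ k ∈ Finset.range (K + 1), ((d : ℚ) - 2 * k) / d * (d.choose k) := by
    refine Finset.sum_nbij' (fun m => (d - m) / 2) (fun k => d - 2 * k) ?_ ?_ ?_ ?_ ?_
    · intro m hm
      simp only [Finset.mem_filter, Finset.mem_Icc] at hm
      simp only [Finset.mem_range]
      omega
    · intro k hk
      simp only [Finset.mem_range] at hk
      simp only [Finset.mem_filter, Finset.mem_Icc]
      omega
    · intro m hm
      simp only [Finset.mem_filter, Finset.mem_Icc] at hm
      omega
    · intro k hk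
      simp only [Finset.mem_range] at hk
      omega
    · intro m hm
      simp only [Finset.mem_filter, Finset.mem_Icc] at hm
      have h2 : 2 * ((d - m) / 2) + m = d := by omega
      have h3 : ((d : ℚ) - 2 * ((d - m) / 2 : ℕ)) = (m : ℚ) := by
        have := congrArg (fun x : ℕ => (x : ℚ)) h2
        push_cast at this
        linarith
      rw [h3]
  rw [hre]
  -- telescoping
  have hterm : ∀ j < K, ((d : ℚ) - 2 * ((j : ℚ) + 1)) / d * (d.choose (j + 1))
      = (n.choose (j + 1) : ℚ) - (n.choose j : ℚ) := by
    intro j hj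
    have hjd : j + 1 ≤ n := by omega
    have hA : n.choose (j + 1) * (n + 1) = (n + 1).choose (j + 1) * (n + 1 - (j + 1)) :=
      Nat.choose_mul_succ_eq n (j + 1)
    have hB : (n + 1) * n.choose j = (n + 1).choose (j + 1) * (j + 1) :=
      Nat.add_one_mul_choose_eq n j
    have hA' : (n.choose (j + 1) : ℚ) * (d : ℚ)
        = (d.choose (j + 1) : ℚ) * ((d : ℚ) - ((j : ℚ) + 1)) := by
      rw [hdn]
      have he : (n + 1 : ℕ) - (j + 1) = n - j := by omega
      rw [he] at hA
      have := congrArg (fun x : ℕ => (x : ℚ)) hA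
      push_cast [Nat.cast_sub (show j ≤ n by omega)] at this ⊢
      linarith
    have hB' : (d : ℚ) * (n.choose j : ℚ) = (d.choose (j + 1) : ℚ) * ((j : ℚ) + 1) := by
      rw [hdn]
      have := congrArg (fun x : ℕ => (x : ℚ)) hB
      push_cast at this ⊢
      linarith
    field_simp
    ring_nf
    ring_nf at hA' hB'
    linarith
  rw [Finset.sum_range_succ']
  push_cast
  rw [show ∑ j ∈ Finset.range K, ((d : ℚ) - 2 * ((j : ℚ) + 1)) / d * (d.choose (j + 1))
      = ∑ j ∈ Finset.range K, ((n.choose (j + 1) : ℚ) - (n.choose j : ℚ)) from by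
    refine Finset.sum_congr rfl fun j hj => ?_
    exact hterm j (Finset.mem_range.mp hj)]
  rw [Finset.sum_range_sub (fun j => (n.choose j : ℚ))]
  simp only [Nat.choose_zero_right, Nat.cast_one, Nat.cast_zero, mul_zero, sub_zero]
  rw [div_self hd0]
  ring
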